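/- arXiv:1004.4269 — 6 statements merged into one kernel-verified Lean document; each statement's English description precedes it below -/
import Mathlib

section
/- Let I be a vertical segment contained in the line {(x,y) : x = θ} of length |I|. Suppose two non-parallel integer lines L_1 = L(A_1,B_1,C_1) and L_2 = L(A_2,B_2,C_2) (with B_i > 0) both intersect I, and their intersection point is P = (p/q, r/q) with p, r, q integers, q > 0, gcd(p,r,q) = 1. Then (i) |qθ − p| ≤ |I|·B_1·B_2, and (ii) q ≤ 2·max(|A_1|,|A_2|)·max(B_1,B_2). -/
/-- Lemma 2: if two non-parallel integer lines both meet a vertical segment of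
length `len` on the line `x = θ`, and meet each other at `P = (p/q, r/q)` in
lowest terms, then `|qθ − p| ≤ len·B₁·B₂` and `q ≤ 2·max(|A₁|,|A₂|)·max(B₁,B₂)`. -/
theorem stmt_1 (θ a len : ℝ) (hlen : 0 ≤ len)
    (A₁ B₁ C₁ A₂ B₂ C₂ : ℤ) (hB₁ : 0 < B₁) (hB₂ : 0 < B₂)
    (hnpar : A₁ * B₂ ≠ A₂ * B₁)
    (hmeet₁ : ∃ y ∈ Set.Icc a (a + len), (A₁ : ℝ) * θ - (B₁ : ℝ) * y + (C₁ : ℝ) = 0)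
    (hmeet₂ : ∃ y ∈ Set.Icc a (a + len), (A₂ : ℝ) * θ - (B₂ : ℝ) * y + (C₂ : ℝ) = 0)
    (p r q : ℤ) (hq : 0 < q) (hgcd : Int.gcd (Int.gcd p r) q = 1)
    (hP₁ : A₁ * p - B₁ * r + C₁ * q = 0)
    (hP₂ : A₂ * p - B₂ * r + C₂ * q = 0) :
    |(q : ℝ) * θ - (p : ℝ)| ≤ len * (B₁ : ℝ) * (B₂ : ℝ) ∧
      q ≤ 2 * max |A₁| |A₂| * max B₁ B₂ := by
  obtain ⟨y₁, hy₁, he₁⟩ := hmeet₁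
  obtain ⟨y₂, hy₂, he₂⟩ := hmeet₂
  have hDne : A₁ * B₂ - A₂ * B₁ ≠ 0 := sub_ne_zero.mpr hnpar
  have hDp : (A₁ * B₂ - A₂ * B₁) * p = q * (B₁ * C₂ - B₂ * C₁) := by
    linear_combination B₂ * hP₁ - B₁ * hP₂
  have hDr : (A₁ * B₂ - A₂ * B₁) * r = q * (A₁ * C₂ - A₂ * C₁) := by
    linear_combination A₂ * hP₁ - A₁ * hP₂
  have h1 : q ∣ (A₁ * B₂ - A₂ * B₁) * p := ⟨_, hDp⟩
  have h2 : q ∣ (A₁ * B₂ - A₂ * B₁) * r := ⟨_, hDr⟩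
  have h3 : q ∣ (A₁ * B₂ - A₂ * B₁) * (Int.gcd p r : ℤ) := by
    rw [Int.gcd_eq_gcd_ab]
    have := dvd_add (h1.mul_right (Int.gcdA p r)) (h2.mul_right (Int.gcdB p r))
    convert this using 1
    · rfl
    ring
  have hcop : IsCoprime ((Int.gcd p r : ℤ)) q := Int.isCoprime_iff_gcd_eq_one.mpr hgcd
  have hqD : q ∣ (A₁ * B₂ - A₂ * B₁) := hcop.symm.dvd_of_dvd_mul_right h3
  constructor
  · -- part (i)
    obtain ⟨k, hk⟩ := hqD
    have hkne : k ≠ 0 := by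
      rintro rfl
      exact hDne (hk.trans (mul_zero q))
    have hkp : k * p = B₁ * C₂ - B₂ * C₁ := by
      have h := hDp
      rw [hk] at h
      exact mul_left_cancel₀ hq.ne' (by linear_combination h)
    have hy : |y₁ - y₂| ≤ len := by
      rw [abs_sub_le_iff]
      constructor <;> [linarith [hy₁.1, hy₁.2, hy₂.1, hy₂.2]; linarith [hy₁.1, hy₁.2, hy₂.1, hy₂.2]]
    have key : (k : ℝ) * ((q : ℝ) * θ - (p : ℝ)) = (B₁ : ℝ) * B₂ * (y₁ - y₂) := by
      have hkR : ((A₁ * B₂ - A₂ * B₁ : ℤ) : ℝ) = (q : ℝ) * (k : ℝ) := by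
        exact_mod_cast congrArg (Int.cast : ℤ → ℝ) hk
      have hkpR : (k : ℝ) * (p : ℝ) = (B₁ : ℝ) * C₂ - (B₂ : ℝ) * C₁ := by
        exact_mod_cast congrArg (Int.cast : ℤ → ℝ) hkp
      push_cast at hkR
      linear_combination (B₂:ℝ)*he₁ - (B₁:ℝ)*he₂ - θ*hkR - hkpR
    have h1k : (1 : ℝ) ≤ |(k : ℝ)| := by
      have : 1 ≤ |k| := Int.one_le_abs hkne
      calc (1:ℝ) ≤ (|k| : ℤ) := by exact_mod_cast this
        _ = |(k : ℝ)| := by push_cast; ring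
    have hbound : |(k : ℝ)| * |(q : ℝ) * θ - (p : ℝ)| ≤ len * B₁ * B₂ := by
      rw [← abs_mul, key, abs_mul, abs_mul]
      rw [abs_of_pos (by exact_mod_cast hB₁ : (0:ℝ) < B₁),
          abs_of_pos (by exact_mod_cast hB₂ : (0:ℝ) < B₂)]
      have hB1R : (0:ℝ) < B₁ := by exact_mod_cast hB₁
      have hB2R : (0:ℝ) < B₂ := by exact_mod_cast hB₂
      nlinarith [mul_le_mul_of_nonneg_left hy (mul_pos hB1R hB2R).le]
    calc |(q : ℝ) * θ - (p : ℝ)| ≤ |(k : ℝ)| * |(q : ℝ) * θ - (p : ℝ)| :=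
          le_mul_of_one_le_left (abs_nonneg _) h1k
      _ ≤ len * B₁ * B₂ := hbound
  · -- part (ii)
    have hqle : q ≤ |A₁ * B₂ - A₂ * B₁| :=
      Int.le_of_dvd (abs_pos.mpr hDne) (hqD.trans (self_dvd_abs _))
    have htri : |A₁ * B₂ - A₂ * B₁| ≤ |A₁| * B₂ + |A₂| * B₁ := by
      calc |A₁ * B₂ - A₂ * B₁| ≤ |A₁ * B₂| + |A₂ * B₁| := abs_sub _ _
        _ = |A₁| * B₂ + |A₂| * B₁ := by
          rw [abs_mul, abs_mul, abs_of_pos hB₂, abs_of_pos hB₁]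
    have hA1 : |A₁| ≤ max |A₁| |A₂| := le_max_left _ _
    have hA2 : |A₂| ≤ max |A₁| |A₂| := le_max_right _ _
    have hB1 : B₁ ≤ max B₁ B₂ := le_max_left _ _
    have hB2 : B₂ ≤ max B₁ B₂ := le_max_right _ _
    nlinarith [abs_nonneg A₁, abs_nonneg A₂, hB₁, hB₂]
end

section
/- Let σ, W > 0 and suppose real numbers A, B satisfy 0 < B ≤ σ, A² ≤ σB, and B·max(A², B²) ≥ W. Then |A|/B ≤ (σ³/W)^(1/4). -/
/-- Lemma 5: if `0 < B ≤ σ`, `A² ≤ σB` and `B·max(A²,B²) ≥ W`, then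
`|A|/B ≤ (σ³/W)^(1/4)`. -/
theorem stmt_2 (σ W A B : ℝ) (hσ : 0 < σ) (hW : 0 < W)
    (hB0 : 0 < B) (hBσ : B ≤ σ) (hA : A ^ 2 ≤ σ * B)
    (hH : W ≤ B * max (A ^ 2) (B ^ 2)) :
    |A| / B ≤ (σ ^ 3 / W) ^ ((1 : ℝ) / 4) := by
  have hx : (0:ℝ) ≤ |A| / B := div_nonneg (abs_nonneg A) hB0.le
  have key : A ^ 4 * W ≤ σ ^ 3 * B ^ 4 := by
    rcases max_cases (A ^ 2) (B ^ 2) with ⟨heq, _⟩ | ⟨heq, _⟩ <;> rw [heq] at hH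
    · -- W ≤ A² B
      have h1 : A ^ 4 * W ≤ A ^ 4 * (B * A ^ 2) :=
        mul_le_mul_of_nonneg_left hH (by positivity)
      have h2 : A ^ 4 * (B * A ^ 2) = (A ^ 2) ^ 3 * B := by ring
      have h3 : (A ^ 2) ^ 3 * B ≤ (σ * B) ^ 3 * B := by
        have := pow_le_pow_left₀ (by positivity) hA 3
        nlinarith
      nlinarith
    · -- W ≤ B³
      have h1 : A ^ 4 * W ≤ A ^ 4 * (B * B ^ 2) :=
        mul_le_mul_of_nonneg_left hH (by positivity)
      have h2 : (A ^ 2) ^ 2 ≤ (σ * B) ^ 2 := pow_le_pow_left₀ (by positivity) hA 2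
      nlinarith [mul_le_mul_of_nonneg_right h2 (show (0:ℝ) ≤ B^3 by positivity),
        mul_le_mul_of_nonneg_left hBσ (show (0:ℝ) ≤ σ^2*B^4 by positivity)]
  have h4 : (|A| / B) ^ (4:ℕ) ≤ σ ^ 3 / W := by
    rw [div_pow, div_le_div_iff₀ (by positivity) hW]
    have : |A| ^ (4:ℕ) = A ^ 4 := by
      rw [show (4:ℕ) = 2 * 2 by norm_num, pow_mul, sq_abs, ← pow_mul]
    rw [this]
    nlinarith
  calc |A| / B = ((|A| / B) ^ (4:ℕ)) ^ ((1:ℝ)/4) := by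
        rw [← Real.rpow_natCast (|A|/B) 4, ← Real.rpow_mul hx]
        norm_num
    _ ≤ (σ ^ 3 / W) ^ ((1:ℝ)/4) :=
        Real.rpow_le_rpow (by positivity) h4 (by norm_num)
end

section
/- Let θ be real, R ≥ 2^422 an integer, λ = 1741/330, 0 < κ ≤ (1/3)·R^(−λ/2), n ≥ 1. Let J ⊂ {θ}×ℝ be a vertical segment of length κ/R^n. Then all integer lines L(A,B,C) (B > 0, gcd(A,B,C) = 1) intersecting J with H(A,B) = B·max(A²,B²) < R^n and B > R^(n/3 − λ) pass through a single common point. -/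
open Real

private lemma key_bounds {Rr nr lam : ℝ} (hR1 : 1 < Rr)
    {A B : ℤ} (hB : 0 < B)
    (hH : (B:ℝ) * max ((A:ℝ)^2) ((B:ℝ)^2) < Rr ^ nr)
    (hBl : (B:ℝ) > Rr ^ (nr/3 - lam)) :
    (B:ℝ) < Rr ^ (nr/3) ∧ |(A:ℝ)| < Rr ^ (nr/3 + lam/2) := by
  have hR0 : (0:ℝ) < Rr := lt_trans one_pos hR1
  have hBpos : (0:ℝ) < (B:ℝ) := by exact_mod_cast hB
  have hmaxB : (B:ℝ)^2 ≤ max ((A:ℝ)^2) ((B:ℝ)^2) := le_max_right _ _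
  have hmaxA : (A:ℝ)^2 ≤ max ((A:ℝ)^2) ((B:ℝ)^2) := le_max_left _ _
  constructor
  · by_contra h
    push_neg at h
    have hcube : (Rr ^ (nr/3))^3 = Rr ^ nr := by
      rw [← rpow_natCast (Rr ^ (nr/3)) 3, ← rpow_mul (le_of_lt hR0)]
      norm_num
    have h3 : (Rr ^ (nr/3))^3 ≤ (B:ℝ)^3 :=
      pow_le_pow_left₀ (le_of_lt (rpow_pos_of_pos hR0 _)) h 3
    nlinarith
  · have hY : (0:ℝ) < Rr ^ (nr/3 - lam) := rpow_pos_of_pos hR0 _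
    have hX : (0:ℝ) < Rr ^ (nr/3 + lam/2) := rpow_pos_of_pos hR0 _
    by_contra h
    push_neg at h
    have hsq : Rr ^ (nr/3 + lam/2) * Rr ^ (nr/3 + lam/2) * Rr ^ (nr/3 - lam) = Rr ^ nr := by
      rw [← rpow_add hR0, ← rpow_add hR0]
      congr 1; ring
    have habs : |(A:ℝ)| * |(A:ℝ)| = (A:ℝ)^2 := by
      rw [← abs_mul, ← sq, abs_of_nonneg (sq_nonneg _)]
    nlinarith [abs_nonneg ((A:ℝ)), mul_le_mul h h (le_of_lt hX) (abs_nonneg ((A:ℝ)))]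

private lemma det_zero {Rr lam κ θ a : ℝ} {n : ℕ}
    (hR1 : 1 < Rr) (hκ0 : 0 < κ) (hκ : κ ≤ (1/3) * Rr ^ (-(lam/2)))
    {A1 B1 C1 A2 B2 C2 A3 B3 C3 : ℤ} {t1 t2 t3 : ℝ}
    (e1 : (A1:ℝ)*θ - B1*t1 + C1 = 0) (e2 : (A2:ℝ)*θ - B2*t2 + C2 = 0)
    (e3 : (A3:ℝ)*θ - B3*t3 + C3 = 0)
    (ht1 : t1 ∈ Set.Icc a (a + κ / Rr^n)) (ht2 : t2 ∈ Set.Icc a (a + κ / Rr^n))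
    (ht3 : t3 ∈ Set.Icc a (a + κ / Rr^n))
    (hB1 : 0 < B1) (hB2 : 0 < B2) (hB3 : 0 < B3)
    (hH1 : (B1:ℝ) * max ((A1:ℝ)^2) ((B1:ℝ)^2) < Rr ^ ((n:ℝ)))
    (hH2 : (B2:ℝ) * max ((A2:ℝ)^2) ((B2:ℝ)^2) < Rr ^ ((n:ℝ)))
    (hH3 : (B3:ℝ) * max ((A3:ℝ)^2) ((B3:ℝ)^2) < Rr ^ ((n:ℝ)))
    (hL1 : (B1:ℝ) > Rr ^ ((n:ℝ)/3 - lam)) (hL2 : (B2:ℝ) > Rr ^ ((n:ℝ)/3 - lam))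
    (hL3 : (B3:ℝ) > Rr ^ ((n:ℝ)/3 - lam)) :
    A3*(B2*C1 - B1*C2) - B3*(A2*C1 - A1*C2) + C3*(A2*B1 - A1*B2) = 0 := by
  have hR0 : (0:ℝ) < Rr := lt_trans one_pos hR1
  have hRn : (0:ℝ) < Rr ^ n := by positivity
  set δ : ℝ := κ / Rr ^ n with hδdef
  have hδ0 : 0 < δ := by positivity
  obtain ⟨hb1, ha1⟩ := key_bounds hR1 hB1 hH1 hL1
  obtain ⟨hb2, ha2⟩ := key_bounds hR1 hB2 hH2 hL2
  obtain ⟨hb3, ha3⟩ := key_bounds hR1 hB3 hH3 hL3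
  set X : ℝ := Rr ^ ((n:ℝ)/3 + lam/2) with hXdef
  set Y : ℝ := Rr ^ ((n:ℝ)/3) with hYdef
  have hX : (0:ℝ) < X := rpow_pos_of_pos hR0 _
  have hY : (0:ℝ) < Y := rpow_pos_of_pos hR0 _
  have hB1R : (0:ℝ) < (B1:ℝ) := by exact_mod_cast hB1
  have hB2R : (0:ℝ) < (B2:ℝ) := by exact_mod_cast hB2
  have hB3R : (0:ℝ) < (B3:ℝ) := by exact_mod_cast hB3
  set N : ℤ := A3*(B2*C1 - B1*C2) - B3*(A2*C1 - A1*C2) + C3*(A2*B1 - A1*B2) with hNdef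
  have hNid : (N:ℝ) = (A3:ℝ)*B1*B2*(t1-t2) + (A2:ℝ)*B1*B3*(t3-t1) + (A1:ℝ)*B2*B3*(t2-t3) := by
    push_cast [hNdef]
    linear_combination ((A3:ℝ)*B2 - (A2:ℝ)*B3) * e1 + ((A1:ℝ)*B3 - (A3:ℝ)*B1) * e2
      + ((A2:ℝ)*B1 - (A1:ℝ)*B2) * e3
  obtain ⟨h1l, h1r⟩ := ht1
  obtain ⟨h2l, h2r⟩ := ht2
  obtain ⟨h3l, h3r⟩ := ht3
  have d12 : |t1 - t2| ≤ δ := abs_le.mpr ⟨by linarith, by linarith⟩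
  have d31 : |t3 - t1| ≤ δ := abs_le.mpr ⟨by linarith, by linarith⟩
  have d23 : |t2 - t3| ≤ δ := abs_le.mpr ⟨by linarith, by linarith⟩
  have k1 : |(A3:ℝ)*B1*B2*(t1-t2)| ≤ |(A3:ℝ)| * B1 * B2 * δ := by
    rw [abs_mul, abs_mul, abs_mul, abs_of_pos hB1R, abs_of_pos hB2R]
    exact mul_le_mul_of_nonneg_left d12 (by positivity)
  have k2 : |(A2:ℝ)*B1*B3*(t3-t1)| ≤ |(A2:ℝ)| * B1 * B3 * δ := by
    rw [abs_mul, abs_mul, abs_mul, abs_of_pos hB1R, abs_of_pos hB3R]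
    exact mul_le_mul_of_nonneg_left d31 (by positivity)
  have k3 : |(A1:ℝ)*B2*B3*(t2-t3)| ≤ |(A1:ℝ)| * B2 * B3 * δ := by
    rw [abs_mul, abs_mul, abs_mul, abs_of_pos hB2R, abs_of_pos hB3R]
    exact mul_le_mul_of_nonneg_left d23 (by positivity)
  have m1 : |(A3:ℝ)| * B1 * B2 < X*Y*Y := by
    calc |(A3:ℝ)| * B1 * B2 = |(A3:ℝ)| * ((B1:ℝ)*B2) := by ring
      _ < X * ((B1:ℝ)*B2) := mul_lt_mul_of_pos_right ha3 (mul_pos hB1R hB2R)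
      _ ≤ X * (Y*Y) := mul_le_mul_of_nonneg_left
          (mul_le_mul hb1.le hb2.le hB2R.le hY.le) hX.le
      _ = X*Y*Y := by ring
  have m2 : |(A2:ℝ)| * B1 * B3 < X*Y*Y := by
    calc |(A2:ℝ)| * B1 * B3 = |(A2:ℝ)| * ((B1:ℝ)*B3) := by ring
      _ < X * ((B1:ℝ)*B3) := mul_lt_mul_of_pos_right ha2 (mul_pos hB1R hB3R)
      _ ≤ X * (Y*Y) := mul_le_mul_of_nonneg_left
          (mul_le_mul hb1.le hb3.le hB3R.le hY.le) hX.le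
      _ = X*Y*Y := by ring
  have m3 : |(A1:ℝ)| * B2 * B3 < X*Y*Y := by
    calc |(A1:ℝ)| * B2 * B3 = |(A1:ℝ)| * ((B2:ℝ)*B3) := by ring
      _ < X * ((B2:ℝ)*B3) := mul_lt_mul_of_pos_right ha1 (mul_pos hB2R hB3R)
      _ ≤ X * (Y*Y) := mul_le_mul_of_nonneg_left
          (mul_le_mul hb2.le hb3.le hB3R.le hY.le) hX.le
      _ = X*Y*Y := by ring
  have hNabs : |(N:ℝ)| < δ * (3 * (X*Y*Y)) := by
    rw [hNid]
    calc |(A3:ℝ)*B1*B2*(t1-t2) + (A2:ℝ)*B1*B3*(t3-t1) + (A1:ℝ)*B2*B3*(t2-t3)|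
        ≤ |(A3:ℝ)*B1*B2*(t1-t2) + (A2:ℝ)*B1*B3*(t3-t1)| + |(A1:ℝ)*B2*B3*(t2-t3)| := abs_add_le _ _
      _ ≤ |(A3:ℝ)*B1*B2*(t1-t2)| + |(A2:ℝ)*B1*B3*(t3-t1)| + |(A1:ℝ)*B2*B3*(t2-t3)| := by
          have := abs_add_le ((A3:ℝ)*B1*B2*(t1-t2)) ((A2:ℝ)*B1*B3*(t3-t1)); linarith
      _ ≤ |(A3:ℝ)| * B1 * B2 * δ + |(A2:ℝ)| * B1 * B3 * δ + |(A1:ℝ)| * B2 * B3 * δ := by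
          linarith
      _ < δ * (3 * (X*Y*Y)) := by
          have q1 := mul_lt_mul_of_pos_right m1 hδ0
          have q2 := mul_lt_mul_of_pos_right m2 hδ0
          have q3 := mul_lt_mul_of_pos_right m3 hδ0
          linarith
  have hbound : δ * (3 * (X*Y*Y)) ≤ 1 := by
    have hXYY : X*Y*Y = Rr ^ ((n:ℝ)) * Rr ^ (lam/2) := by
      rw [hXdef, hYdef, ← rpow_add hR0, ← rpow_add hR0, ← rpow_add hR0]
      congr 1; ring
    have hnpow : Rr ^ n = Rr ^ ((n:ℝ)) := (rpow_natCast Rr n).symm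
    have hinv : Rr ^ (-(lam/2)) * Rr ^ (lam/2) = 1 := by
      rw [← rpow_add hR0]; norm_num
    have hrp : (0:ℝ) < Rr ^ (lam/2) := rpow_pos_of_pos hR0 _
    have hrn : (0:ℝ) < Rr ^ ((n:ℝ)) := rpow_pos_of_pos hR0 _
    have h3κ : 3 * κ ≤ Rr ^ (-(lam/2)) := by linarith
    have hlast : 3 * κ * Rr ^ (lam/2) ≤ 1 := by
      calc 3 * κ * Rr ^ (lam/2) ≤ Rr ^ (-(lam/2)) * Rr ^ (lam/2) :=
            mul_le_mul_of_nonneg_right h3κ (le_of_lt hrp)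
        _ = 1 := hinv
    calc δ * (3 * (X*Y*Y)) = 3 * κ * Rr ^ (lam/2) := by
          rw [hXYY, hδdef, hnpow]; field_simp
      _ ≤ 1 := hlast
  have hlt1 : |(N:ℝ)| < 1 := lt_of_lt_of_le hNabs hbound
  have habsN : |N| < 1 := by
    have h' : ((|N| : ℤ):ℝ) < 1 := by rwa [← Int.cast_abs] at hlt1
    exact_mod_cast h'
  have := abs_lt.mp habsN
  omega

/-- Lemma 3: all integer lines of height `< R^n` with `B > R^(n/3 − λ)`
intersecting a vertical segment of length `κ/R^n` on `x = θ` pass through a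
single common point. -/
theorem stmt_3 (θ : ℝ) (R n : ℕ) (hR : 2 ^ 422 ≤ R) (hn : 1 ≤ n)
    (lam κ : ℝ) (hlam : lam = 1741 / 330)
    (hκ0 : 0 < κ) (hκ : κ ≤ (1 / 3) * (R : ℝ) ^ (-(lam / 2)))
    (a : ℝ) :
    ∃ x y : ℝ, ∀ A B C : ℤ, 0 < B → Int.gcd (Int.gcd A B) C = 1 →
      (∃ t ∈ Set.Icc a (a + κ / (R : ℝ) ^ n),
        (A : ℝ) * θ - (B : ℝ) * t + (C : ℝ) = 0) →
      ((B * max (A ^ 2) (B ^ 2) : ℤ) : ℝ) < (R : ℝ) ^ n →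
      (B : ℝ) > (R : ℝ) ^ ((n : ℝ) / 3 - lam) →
      (A : ℝ) * x - (B : ℝ) * y + (C : ℝ) = 0 := by
  classical
  have hR2 : (2:ℝ) ≤ (R:ℝ) := by
    have : (2:ℕ) ≤ R := le_trans (by decide) hR
    exact_mod_cast this
  have hR1 : (1:ℝ) < (R:ℝ) := by linarith
  have hR0 : (0:ℝ) < (R:ℝ) := by linarith
  have hlam0 : (0:ℝ) < lam := by rw [hlam]; norm_num
  have hRn : (0:ℝ) < (R:ℝ)^n := by positivity
  have hconv : ∀ A B : ℤ, ((B * max (A ^ 2) (B ^ 2) : ℤ) : ℝ) < (R : ℝ) ^ n →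
      (B:ℝ) * max ((A:ℝ)^2) ((B:ℝ)^2) < (R:ℝ) ^ ((n:ℝ)) := by
    intro A B h
    rw [← Real.rpow_natCast (R:ℝ) n] at h
    push_cast at h
    exact h
  set Q : ℤ → ℤ → ℤ → ℝ → Prop := fun A B C t =>
    0 < B ∧ t ∈ Set.Icc a (a + κ / (R:ℝ)^n) ∧ (A:ℝ)*θ - (B:ℝ)*t + (C:ℝ) = 0 ∧
    ((B * max (A ^ 2) (B ^ 2) : ℤ) : ℝ) < (R : ℝ) ^ n ∧
    (B : ℝ) > (R : ℝ) ^ ((n : ℝ) / 3 - lam) with hQdef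
  by_cases hcase : ∃ A1 B1 C1 t1 A2 B2 C2 t2,
      Q A1 B1 C1 t1 ∧ Q A2 B2 C2 t2 ∧ A1*B2 ≠ A2*B1
  · obtain ⟨A1,B1,C1,t1,A2,B2,C2,t2,h1,h2,hne⟩ := hcase
    obtain ⟨hB1, ht1, e1, hH1, hL1⟩ := h1
    obtain ⟨hB2, ht2, e2, hH2, hL2⟩ := h2
    have hdR : ((A2:ℝ)*B1 - (A1:ℝ)*B2) ≠ 0 := by
      have : (A2:ℤ)*B1 ≠ A1*B2 := fun h => hne h.symm
      have h' : ((A2:ℝ))*B1 ≠ (A1:ℝ)*B2 := by exact_mod_cast this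
      exact sub_ne_zero.mpr h'
    refine ⟨((B2:ℝ)*C1 - (B1:ℝ)*C2)/((A2:ℝ)*B1 - (A1:ℝ)*B2),
            ((A2:ℝ)*C1 - (A1:ℝ)*C2)/((A2:ℝ)*B1 - (A1:ℝ)*B2), ?_⟩
    intro A B C hBpos hgcd hint hH hBl
    obtain ⟨t, ht, heq⟩ := hint
    have hN : A*(B2*C1 - B1*C2) - B*(A2*C1 - A1*C2) + C*(A2*B1 - A1*B2) = 0 :=
      det_zero hR1 hκ0 hκ e1 e2 heq ht1 ht2 ht hB1 hB2 hBpos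
        (hconv A1 B1 hH1) (hconv A2 B2 hH2) (hconv A B hH) hL1 hL2 hBl
    have hNR : (A:ℝ)*((B2:ℝ)*C1 - (B1:ℝ)*C2) - (B:ℝ)*((A2:ℝ)*C1 - (A1:ℝ)*C2)
        + (C:ℝ)*((A2:ℝ)*B1 - (A1:ℝ)*B2) = 0 := by exact_mod_cast hN
    rw [mul_div_assoc', mul_div_assoc', div_sub_div_same, div_add' _ _ _ hdR, div_eq_zero_iff]
    left
    linear_combination hNR
  · by_cases hex : ∃ A0 B0 C0 t0, Q A0 B0 C0 t0
    · obtain ⟨A0,B0,C0,t0,h0⟩ := hex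
      obtain ⟨hB0, ht0, e0, hH0, hL0⟩ := h0
      refine ⟨θ, t0, ?_⟩
      intro A B C hBpos hgcd hint hH hBl
      obtain ⟨t, ht, heq⟩ := hint
      push_neg at hcase
      have hpar : A0*B = A*B0 :=
        hcase A0 B0 C0 t0 A B C t ⟨hB0, ht0, e0, hH0, hL0⟩ ⟨hBpos, ht, heq, hH, hBl⟩
      have hparR : (A0:ℝ)*B = (A:ℝ)*B0 := by exact_mod_cast hpar
      have hB0R : (0:ℝ) < (B0:ℝ) := by exact_mod_cast hB0
      have hBR : (0:ℝ) < (B:ℝ) := by exact_mod_cast hBpos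
      -- show C0*B = C*B0
      obtain ⟨hb0, -⟩ := key_bounds hR1 hB0 (hconv A0 B0 hH0) hL0
      obtain ⟨hb, -⟩ := key_bounds hR1 hBpos (hconv A B hH) hBl
      have hYY : (R:ℝ) ^ ((n:ℝ)/3) * (R:ℝ) ^ ((n:ℝ)/3) ≤ (R:ℝ) ^ ((n:ℝ)) := by
        rw [← Real.rpow_add hR0]
        apply Real.rpow_le_rpow_of_exponent_le (le_of_lt hR1)
        have : (0:ℝ) ≤ (n:ℝ) := Nat.cast_nonneg n
        linarith
      have hD : ((C0*B - C*B0 : ℤ):ℝ) = (B0:ℝ)*B*(t0 - t) := by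
        push_cast
        linear_combination (B:ℝ)*e0 - (B0:ℝ)*heq - θ*hparR
      have hYpos : (0:ℝ) < (R:ℝ) ^ ((n:ℝ)/3) := Real.rpow_pos_of_pos hR0 _
      set δ : ℝ := κ / (R:ℝ)^n with hδdef
      have hδ0 : 0 < δ := by positivity
      have habst : |t0 - t| ≤ δ := by
        obtain ⟨u1, u2⟩ := ht0
        obtain ⟨v1, v2⟩ := ht
        exact abs_le.mpr ⟨by linarith, by linarith⟩
      have hBB : (B0:ℝ)*B < (R:ℝ) ^ ((n:ℝ)) :=
        lt_of_lt_of_le (mul_lt_mul hb0 hb.le hBR hYpos.le) hYY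
      have hk1 : κ < 1 := by
        have : (R:ℝ) ^ (-(lam/2)) ≤ 1 :=
          Real.rpow_le_one_of_one_le_of_nonpos (le_of_lt hR1) (by linarith)
        linarith
      have habs : |((C0*B - C*B0 : ℤ):ℝ)| < 1 := by
        rw [hD, abs_mul, abs_mul, abs_of_pos hB0R, abs_of_pos hBR]
        have s1 : (B0:ℝ)*B*|t0 - t| ≤ (B0:ℝ)*B*δ :=
          mul_le_mul_of_nonneg_left habst (by positivity)
        have s2 : (B0:ℝ)*B*δ < (R:ℝ) ^ ((n:ℝ)) * δ := mul_lt_mul_of_pos_right hBB hδ0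
        have s3 : (R:ℝ) ^ ((n:ℝ)) * δ = κ := by
          rw [hδdef, ← Real.rpow_natCast (R:ℝ) n]
          field_simp
        linarith
      have hCB : C0*B = C*B0 := by
        have h' : |C0*B - C*B0| < 1 := by
          have : ((|C0*B - C*B0| : ℤ):ℝ) < 1 := by rwa [← Int.cast_abs] at habs
          exact_mod_cast this
        have := abs_lt.mp h'
        omega
      have hCBR : (C0:ℝ)*B = (C:ℝ)*B0 := by exact_mod_cast hCB
      have hB0ne : (B0:ℝ) ≠ 0 := ne_of_gt hB0R
      have key : (B0:ℝ) * ((A:ℝ)*θ - (B:ℝ)*t0 + C) = 0 := by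
        linear_combination (B:ℝ)*e0 - θ*hparR - hCBR
      exact (mul_eq_zero.mp key).resolve_left hB0ne
    · refine ⟨0, 0, ?_⟩
      intro A B C hBpos hgcd hint hH hBl
      obtain ⟨t, ht, heq⟩ := hint
      exact absurd ⟨A, B, C, t, hBpos, ht, heq, hH, hBl⟩ hex
end

section
/- Suppose p, r, q are integers with q > 0 and gcd(p,r,q) = 1. Then there exist integers A, B, C with (A,B) ≠ (0,0), A·p − B·r + C·q = 0, max(|A|, B) ≤ √q, and B ≥ 0. -/
lemma aux_pigeon (p r q : ℤ) (hq : 0 < q) :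
    ∃ A B : ℤ, (A, B) ≠ (0, 0) ∧ q ∣ (A * p - B * r) ∧
      |A| ≤ (Nat.sqrt q.toNat : ℤ) ∧ |B| ≤ (Nat.sqrt q.toNat : ℤ) := by
  set q' := q.toNat with hq'
  have hq0 : 0 < q' := by omega
  haveI : NeZero q' := ⟨by omega⟩
  set n := Nat.sqrt q' with hn
  have hcard : Fintype.card (ZMod q') < Fintype.card (Fin (n+1) × Fin (n+1)) := by
    simp [ZMod.card, Fintype.card_prod]
    have := Nat.lt_succ_sqrt q'
    nlinarith [Nat.lt_succ_sqrt q']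
  obtain ⟨x, y, hxy, hf⟩ := Fintype.exists_ne_map_eq_of_card_lt
    (fun ab : Fin (n+1) × Fin (n+1) =>
      (((ab.1 : ℤ) * p - (ab.2 : ℤ) * r : ℤ) : ZMod q')) hcard
  refine ⟨(x.1 : ℤ) - y.1, (x.2 : ℤ) - y.2, ?_, ?_, ?_, ?_⟩
  · intro h
    apply hxy
    have h1 : ((x.1 : ℤ) - y.1, (x.2 : ℤ) - y.2).1 = (0 : ℤ) := by rw [h]
    have h2 : ((x.1 : ℤ) - y.1, (x.2 : ℤ) - y.2).2 = (0 : ℤ) := by rw [h]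
    simp at h1 h2
    have e1 : (x.1 : ℤ) = y.1 := by omega
    have e2 : (x.2 : ℤ) = y.2 := by omega
    have : x.1 = y.1 := by exact_mod_cast Fin.ext (by exact_mod_cast e1)
    have : x.2 = y.2 := by exact_mod_cast Fin.ext (by exact_mod_cast e2)
    exact Prod.ext ‹x.1 = y.1› ‹x.2 = y.2›
  · have := (ZMod.intCast_eq_intCast_iff _ _ _).mp hf
    have hd : (q' : ℤ) ∣ (((x.1 : ℤ) * p - (x.2 : ℤ) * r) - ((y.1 : ℤ) * p - (y.2 : ℤ) * r)) :=
      Int.ModEq.dvd this.symm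
    have hqq : (q' : ℤ) = q := by omega
    rw [hqq] at hd
    convert hd using 1
    ring
  · have h1 : (x.1 : ℤ) ≤ n := by exact_mod_cast Nat.lt_succ_iff.mp x.1.isLt
    have h2 : (y.1 : ℤ) ≤ n := by exact_mod_cast Nat.lt_succ_iff.mp y.1.isLt
    have h3 : (0:ℤ) ≤ (x.1 : ℤ) := Int.natCast_nonneg _
    have h4 : (0:ℤ) ≤ (y.1 : ℤ) := Int.natCast_nonneg _
    rw [abs_le]; omega
  · have h1 : (x.2 : ℤ) ≤ n := by exact_mod_cast Nat.lt_succ_iff.mp x.2.isLt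
    have h2 : (y.2 : ℤ) ≤ n := by exact_mod_cast Nat.lt_succ_iff.mp y.2.isLt
    rw [abs_le]; omega

/-- Pigeonhole step of Lemma 9: if `gcd(p,r,q) = 1`, `q > 0`, then there are
integers `A, B, C` with `(A,B) ≠ (0,0)`, `Ap − Br + Cq = 0`, `max(|A|,B) ≤ √q`
and `B ≥ 0`. -/
theorem stmt_10 (p r q : ℤ) (hq : 0 < q) (hgcd : Int.gcd (Int.gcd p r) q = 1) :
    ∃ A B C : ℤ, (A, B) ≠ (0, 0) ∧ A * p - B * r + C * q = 0 ∧
      ((max |A| B : ℤ) : ℝ) ≤ Real.sqrt (q : ℝ) ∧ 0 ≤ B := by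
  obtain ⟨A, B, hne, hdvd, hA, hB⟩ := aux_pigeon p r q hq
  -- adjust sign so that B ≥ 0
  obtain ⟨A, B, hne, hdvd, hA, hB, hBpos⟩ :
      ∃ A B : ℤ, (A, B) ≠ (0, 0) ∧ q ∣ (A * p - B * r) ∧
        |A| ≤ (Nat.sqrt q.toNat : ℤ) ∧ |B| ≤ (Nat.sqrt q.toNat : ℤ) ∧ 0 ≤ B := by
    rcases le_or_gt 0 B with h | h
    · exact ⟨A, B, hne, hdvd, hA, hB, h⟩
    · refine ⟨-A, -B, ?_, ?_, by simpa using hA, by simpa using hB, by omega⟩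
      · simp only [ne_eq, Prod.mk.injEq, neg_eq_zero, not_and] at hne ⊢
        intro hA0 hB0; omega
      · have : -A * p - -B * r = -(A * p - B * r) := by ring
        rw [this]; exact dvd_neg.mpr hdvd
  obtain ⟨k, hk⟩ := hdvd
  refine ⟨A, B, -k, hne, by rw [hk]; ring, ?_, hBpos⟩
  have hnsq : ((Nat.sqrt q.toNat : ℤ) : ℝ) ≤ Real.sqrt (q : ℝ) := by
    rw [show ((Nat.sqrt q.toNat : ℤ) : ℝ) = ((Nat.sqrt q.toNat : ℕ) : ℝ) by push_cast; ring]
    rw [Real.le_sqrt (by positivity)]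
    swap
    · exact_mod_cast hq.le
    have h0 : (Nat.sqrt q.toNat)^2 ≤ q.toNat := Nat.sqrt_le' _
    have h1 : ((Nat.sqrt q.toNat : ℕ) : ℝ)^2 ≤ ((q.toNat : ℕ) : ℝ) := by exact_mod_cast h0
    have h2 : ((q.toNat : ℤ) : ℝ) = (q : ℝ) := by exact_mod_cast Int.toNat_of_nonneg hq.le
    push_cast at h1 h2 ⊢
    linarith
  refine le_trans ?_ hnsq
  have : (max |A| B : ℤ) ≤ (Nat.sqrt q.toNat : ℤ) := by
    rw [max_le_iff]
    exact ⟨hA, le_trans (le_abs_self B) hB⟩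
  exact_mod_cast this
end

section
/- Let θ be real, R ≥ 2^422, λ = 1741/330, κ ≤ (1/3)R^(−λ/2), integers n ≥ 1 and 1 ≤ l ≤ n/(3λ). All integer lines L(A,B,C) (B > 0) intersecting a vertical segment J of length κ/R^(n−l) on x = θ with H(A,B) < R^n and R^(n/3 − λ(l+1)) ≤ B ≤ R^(n/3 − λl) pass through a single common point. -/
set_option maxRecDepth 8000
set_option maxHeartbeats 1000000

lemma det3_aux (θ a lenJ Ab Bb : ℝ) (hlen : 0 ≤ lenJ) (hAb : 0 ≤ Ab) (hBb : 0 ≤ Bb)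
    (A1 B1 C1 A2 B2 C2 A3 B3 C3 : ℤ) (t1 t2 t3 : ℝ)
    (ht1 : t1 ∈ Set.Icc a (a + lenJ)) (he1 : (A1 : ℝ) * θ - B1 * t1 + C1 = 0)
    (hA1 : |(A1 : ℝ)| ≤ Ab) (hBu1 : (B1 : ℝ) ≤ Bb) (hB1 : (0:ℝ) ≤ B1)
    (ht2 : t2 ∈ Set.Icc a (a + lenJ)) (he2 : (A2 : ℝ) * θ - B2 * t2 + C2 = 0)
    (hA2 : |(A2 : ℝ)| ≤ Ab) (hBu2 : (B2 : ℝ) ≤ Bb) (hB2 : (0:ℝ) ≤ B2)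
    (ht3 : t3 ∈ Set.Icc a (a + lenJ)) (he3 : (A3 : ℝ) * θ - B3 * t3 + C3 = 0)
    (hA3 : |(A3 : ℝ)| ≤ Ab) (hBu3 : (B3 : ℝ) ≤ Bb) (hB3 : (0:ℝ) ≤ B3)
    (hbig : 6 * lenJ * Ab * Bb ^ 2 < 1) :
    A1 * (B2 * C3 - B3 * C2) - B1 * (A2 * C3 - A3 * C2) + C1 * (A2 * B3 - A3 * B2) = 0 := by
  set Δ : ℤ := A1 * (B2 * C3 - B3 * C2) - B1 * (A2 * C3 - A3 * C2) + C1 * (A2 * B3 - A3 * B2)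
    with hΔ
  have hΔr : ((Δ : ℤ) : ℝ) = (B1 : ℝ) * (t1 - a) * ((A2 : ℝ) * B3 - (A3 : ℝ) * B2)
      - (B2 : ℝ) * (t2 - a) * ((A1 : ℝ) * B3 - (A3 : ℝ) * B1)
      + (B3 : ℝ) * (t3 - a) * ((A1 : ℝ) * B2 - (A2 : ℝ) * B1) := by
    push_cast [hΔ]
    linear_combination ((A2 : ℝ) * B3 - (A3 : ℝ) * B2) * he1
      + ((A3 : ℝ) * B1 - (A1 : ℝ) * B3) * he2 + ((A1 : ℝ) * B2 - (A2 : ℝ) * B1) * he3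
  obtain ⟨hs1a, hs1b⟩ := ht1
  obtain ⟨hs2a, hs2b⟩ := ht2
  obtain ⟨hs3a, hs3b⟩ := ht3
  have hM1 : |(A2 : ℝ) * B3 - (A3 : ℝ) * B2| ≤ 2 * Ab * Bb := by
    have h1 : |(A2 : ℝ) * B3| ≤ Ab * Bb := by
      rw [abs_mul, abs_of_nonneg hB3]
      exact mul_le_mul hA2 hBu3 hB3 hAb
    have h2 : |(A3 : ℝ) * B2| ≤ Ab * Bb := by
      rw [abs_mul, abs_of_nonneg hB2]
      exact mul_le_mul hA3 hBu2 hB2 hAb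
    calc |(A2 : ℝ) * B3 - (A3 : ℝ) * B2| ≤ |(A2 : ℝ) * B3| + |(A3 : ℝ) * B2| := abs_sub _ _
      _ ≤ 2 * Ab * Bb := by linarith
  have hM2 : |(A1 : ℝ) * B3 - (A3 : ℝ) * B1| ≤ 2 * Ab * Bb := by
    have h1 : |(A1 : ℝ) * B3| ≤ Ab * Bb := by
      rw [abs_mul, abs_of_nonneg hB3]; exact mul_le_mul hA1 hBu3 hB3 hAb
    have h2 : |(A3 : ℝ) * B1| ≤ Ab * Bb := by
      rw [abs_mul, abs_of_nonneg hB1]; exact mul_le_mul hA3 hBu1 hB1 hAb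
    calc |(A1 : ℝ) * B3 - (A3 : ℝ) * B1| ≤ |(A1 : ℝ) * B3| + |(A3 : ℝ) * B1| := abs_sub _ _
      _ ≤ 2 * Ab * Bb := by linarith
  have hM3 : |(A1 : ℝ) * B2 - (A2 : ℝ) * B1| ≤ 2 * Ab * Bb := by
    have h1 : |(A1 : ℝ) * B2| ≤ Ab * Bb := by
      rw [abs_mul, abs_of_nonneg hB2]; exact mul_le_mul hA1 hBu2 hB2 hAb
    have h2 : |(A2 : ℝ) * B1| ≤ Ab * Bb := by
      rw [abs_mul, abs_of_nonneg hB1]; exact mul_le_mul hA2 hBu1 hB1 hAb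
    calc |(A1 : ℝ) * B2 - (A2 : ℝ) * B1| ≤ |(A1 : ℝ) * B2| + |(A2 : ℝ) * B1| := abs_sub _ _
      _ ≤ 2 * Ab * Bb := by linarith
  have key : ∀ (b s : ℝ) (M : ℝ), 0 ≤ b → b ≤ Bb → 0 ≤ s → s ≤ lenJ → |M| ≤ 2 * Ab * Bb →
      |b * s * M| ≤ 2 * lenJ * Ab * Bb ^ 2 := by
    intro b s M hb hbB hs hsl hM
    rw [abs_mul, abs_mul, abs_of_nonneg hb, abs_of_nonneg hs]
    calc b * s * |M| ≤ (Bb * lenJ) * (2 * Ab * Bb) := by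
          apply mul_le_mul (mul_le_mul hbB hsl hs hBb) hM (abs_nonneg _)
            (mul_nonneg hBb hlen)
      _ = 2 * lenJ * Ab * Bb ^ 2 := by ring
  have hT1 := key (B1 : ℝ) (t1 - a) _ hB1 hBu1 (by linarith) (by linarith) hM1
  have hT2 := key (B2 : ℝ) (t2 - a) _ hB2 hBu2 (by linarith) (by linarith) hM2
  have hT3 := key (B3 : ℝ) (t3 - a) _ hB3 hBu3 (by linarith) (by linarith) hM3
  have habs : |((Δ : ℤ) : ℝ)| < 1 := by
    rw [hΔr]
    calc |(B1 : ℝ) * (t1 - a) * ((A2 : ℝ) * B3 - (A3 : ℝ) * B2)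
        - (B2 : ℝ) * (t2 - a) * ((A1 : ℝ) * B3 - (A3 : ℝ) * B1)
        + (B3 : ℝ) * (t3 - a) * ((A1 : ℝ) * B2 - (A2 : ℝ) * B1)|
        ≤ |(B1 : ℝ) * (t1 - a) * ((A2 : ℝ) * B3 - (A3 : ℝ) * B2)
          - (B2 : ℝ) * (t2 - a) * ((A1 : ℝ) * B3 - (A3 : ℝ) * B1)|
          + |(B3 : ℝ) * (t3 - a) * ((A1 : ℝ) * B2 - (A2 : ℝ) * B1)| := abs_add_le _ _
      _ ≤ |(B1 : ℝ) * (t1 - a) * ((A2 : ℝ) * B3 - (A3 : ℝ) * B2)|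
          + |(B2 : ℝ) * (t2 - a) * ((A1 : ℝ) * B3 - (A3 : ℝ) * B1)|
          + |(B3 : ℝ) * (t3 - a) * ((A1 : ℝ) * B2 - (A2 : ℝ) * B1)| := by
            linarith [abs_sub ((B1 : ℝ) * (t1 - a) * ((A2 : ℝ) * B3 - (A3 : ℝ) * B2))
              ((B2 : ℝ) * (t2 - a) * ((A1 : ℝ) * B3 - (A3 : ℝ) * B1))]
      _ < 1 := by nlinarith
  rw [← Int.cast_abs] at habs
  have h1 : |Δ| < 1 := by exact_mod_cast habs

  obtain ⟨hl, hr⟩ := abs_lt.mp h1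
  omega



/-- Lemma 3*: all integer lines with `H(A,B) < R^n` and
`R^(n/3 − λ(l+1)) ≤ B ≤ R^(n/3 − λl)` intersecting a vertical segment of length
`κ/R^(n−l)` on `x = θ` pass through a single common point. -/
theorem stmt_14 (θ : ℝ) (R : ℕ) (hR : 2 ^ 422 ≤ R)
    (lam κ : ℝ) (hlam : lam = 1741 / 330)
    (hκ0 : 0 < κ) (hκ : κ ≤ (1 / 3) * (R : ℝ) ^ (-(lam / 2)))
    (n l : ℕ) (hn : 1 ≤ n) (hl1 : 1 ≤ l) (hl2 : (l : ℝ) ≤ (n : ℝ) / (3 * lam))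
    (a : ℝ) :
    ∃ x y : ℝ, ∀ A B C : ℤ, 0 < B →
      (∃ t ∈ Set.Icc a (a + κ / (R : ℝ) ^ ((n : ℝ) - l)),
        (A : ℝ) * θ - (B : ℝ) * t + (C : ℝ) = 0) →
      ((B * max (A ^ 2) (B ^ 2) : ℤ) : ℝ) < (R : ℝ) ^ (n : ℝ) →
      (R : ℝ) ^ ((n : ℝ) / 3 - lam * (l + 1)) ≤ (B : ℝ) →
      (B : ℝ) ≤ (R : ℝ) ^ ((n : ℝ) / 3 - lam * l) →
      (A : ℝ) * x - (B : ℝ) * y + (C : ℝ) = 0 := by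
  have hρ2 : (2 : ℝ) ^ 422 ≤ (R : ℝ) := by exact_mod_cast hR
  have hρ0 : (0 : ℝ) < (R : ℝ) := lt_of_lt_of_le (by positivity) hρ2
  have hρ1 : (1 : ℝ) ≤ (R : ℝ) := le_trans (one_le_pow₀ (by norm_num)) hρ2
  have hn' : (1 : ℝ) ≤ (n : ℝ) := by exact_mod_cast hn
  have hl' : (1 : ℝ) ≤ (l : ℝ) := by exact_mod_cast hl1
  set lenJ : ℝ := κ / (R : ℝ) ^ ((n : ℝ) - l) with hlenJ
  set Ab : ℝ := (R : ℝ) ^ ((n : ℝ) / 3 + lam * ((l : ℝ) + 1) / 2) with hAbdef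
  set Bb : ℝ := (R : ℝ) ^ ((n : ℝ) / 3 - lam * ((l : ℝ))) with hBbdef
  have hAbpos : 0 < Ab := Real.rpow_pos_of_pos hρ0 _
  have hBbpos : 0 < Bb := Real.rpow_pos_of_pos hρ0 _
  have hlen_pos : 0 < lenJ := div_pos hκ0 (Real.rpow_pos_of_pos hρ0 _)
  have hlen_le : lenJ ≤ (1 / 3) * (R : ℝ) ^ (-(lam / 2) - ((n : ℝ) - l)) := by
    rw [Real.rpow_sub hρ0, ← mul_div_assoc, hlenJ]
    exact (div_le_div_iff_of_pos_right (Real.rpow_pos_of_pos hρ0 _)).mpr hκ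
  -- pairwise bound : Bb * Bb * lenJ < 1
  have hpair : Bb * Bb * lenJ < 1 := by
    have h1 : Bb * Bb * lenJ ≤ Bb * Bb * ((1 / 3) * (R : ℝ) ^ (-(lam / 2) - ((n : ℝ) - l))) :=
      mul_le_mul_of_nonneg_left hlen_le (by positivity)
    have h2 : (R : ℝ) ^ ((n : ℝ) / 3 - lam * (l : ℝ)) * (R : ℝ) ^ ((n : ℝ) / 3 - lam * (l : ℝ))
        * (R : ℝ) ^ (-(lam / 2) - ((n : ℝ) - l))
        = (R : ℝ) ^ (((n : ℝ) / 3 - lam * l) + ((n : ℝ) / 3 - lam * l)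
          + (-(lam / 2) - ((n : ℝ) - l))) := by
      rw [← Real.rpow_add hρ0, ← Real.rpow_add hρ0]
    have h3 : (R : ℝ) ^ (((n : ℝ) / 3 - lam * l) + ((n : ℝ) / 3 - lam * l)
        + (-(lam / 2) - ((n : ℝ) - l))) ≤ 1 := by
      apply Real.rpow_le_one_of_one_le_of_nonpos hρ1
      subst hlam; nlinarith [hn', hl']
    calc Bb * Bb * lenJ ≤ (1 / 3) * ((R : ℝ) ^ ((n : ℝ) / 3 - lam * (l : ℝ))
          * (R : ℝ) ^ ((n : ℝ) / 3 - lam * (l : ℝ))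
          * (R : ℝ) ^ (-(lam / 2) - ((n : ℝ) - l))) := by rw [hBbdef]; linarith [h1]
      _ ≤ (1 / 3) * 1 := by rw [h2]; linarith [h3]
      _ < 1 := by norm_num
  -- triple bound : 6 * lenJ * Ab * Bb ^ 2 < 1
  have htrip : 6 * lenJ * Ab * Bb ^ 2 < 1 := by
    have h1 : 6 * lenJ * Ab * Bb ^ 2
        ≤ 6 * ((1 / 3) * (R : ℝ) ^ (-(lam / 2) - ((n : ℝ) - l))) * Ab * Bb ^ 2 := by
      have := mul_le_mul_of_nonneg_right
        (mul_le_mul_of_nonneg_right (mul_le_mul_of_nonneg_left hlen_le (by norm_num : (0:ℝ) ≤ 6))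
          hAbpos.le) (sq_nonneg Bb)
      linarith [this]
    have h2 : (R : ℝ) ^ (-(lam / 2) - ((n : ℝ) - l))
        * (R : ℝ) ^ ((n : ℝ) / 3 + lam * ((l : ℝ) + 1) / 2)
        * ((R : ℝ) ^ ((n : ℝ) / 3 - lam * (l : ℝ)) * (R : ℝ) ^ ((n : ℝ) / 3 - lam * (l : ℝ)))
        = (R : ℝ) ^ ((-(lam / 2) - ((n : ℝ) - l)) + ((n : ℝ) / 3 + lam * ((l : ℝ) + 1) / 2)
          + (((n : ℝ) / 3 - lam * l) + ((n : ℝ) / 3 - lam * l))) := by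
      rw [← Real.rpow_add hρ0, ← Real.rpow_add hρ0, ← Real.rpow_add hρ0]
    have hexp : (-(lam / 2) - ((n : ℝ) - l)) + ((n : ℝ) / 3 + lam * ((l : ℝ) + 1) / 2)
        + (((n : ℝ) / 3 - lam * l) + ((n : ℝ) / 3 - lam * l)) ≤ -1 := by
      subst hlam; nlinarith [hl']
    have h3 : (R : ℝ) ^ ((-(lam / 2) - ((n : ℝ) - l)) + ((n : ℝ) / 3 + lam * ((l : ℝ) + 1) / 2)
        + (((n : ℝ) / 3 - lam * l) + ((n : ℝ) / 3 - lam * l))) ≤ ((2 : ℝ) ^ 422)⁻¹ := by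
      calc _ ≤ (R : ℝ) ^ (-1 : ℝ) := Real.rpow_le_rpow_of_exponent_le hρ1 hexp
        _ = ((R : ℝ))⁻¹ := Real.rpow_neg_one _
        _ ≤ ((2 : ℝ) ^ 422)⁻¹ := by
            apply inv_anti₀ (by positivity) hρ2
    calc 6 * lenJ * Ab * Bb ^ 2
        ≤ 2 * ((R : ℝ) ^ (-(lam / 2) - ((n : ℝ) - l))
          * (R : ℝ) ^ ((n : ℝ) / 3 + lam * ((l : ℝ) + 1) / 2)
          * ((R : ℝ) ^ ((n : ℝ) / 3 - lam * (l : ℝ)) * (R : ℝ) ^ ((n : ℝ) / 3 - lam * (l : ℝ)))) := by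
          rw [hAbdef, hBbdef]; nlinarith [h1]
      _ ≤ 2 * ((2 : ℝ) ^ 422)⁻¹ := by rw [h2]; linarith [h3]
      _ < 1 := by
          have h : (2:ℝ)^1 < 2^422 := pow_lt_pow_right₀ (by norm_num) (by norm_num)
          rw [← div_eq_mul_inv, div_lt_one (by positivity)]; simpa using h
  -- extraction of real bounds from the hypotheses
  have key : ∀ A B C : ℤ, 0 < B →
      (∃ t ∈ Set.Icc a (a + lenJ), (A : ℝ) * θ - (B : ℝ) * t + (C : ℝ) = 0) →
      ((B * max (A ^ 2) (B ^ 2) : ℤ) : ℝ) < (R : ℝ) ^ (n : ℝ) →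
      (R : ℝ) ^ ((n : ℝ) / 3 - lam * (l + 1)) ≤ (B : ℝ) →
      (B : ℝ) ≤ Bb →
      ∃ t ∈ Set.Icc a (a + lenJ),
      (A : ℝ) * θ - (B : ℝ) * t + (C : ℝ) = 0 ∧ |(A : ℝ)| ≤ Ab ∧ (B : ℝ) ≤ Bb ∧
      (0 : ℝ) ≤ (B : ℝ) ∧ (0 : ℝ) < (B : ℝ) := by
    intro A B C hB hseg hH hlo hhi
    obtain ⟨t, ht, he⟩ := hseg
    have hBpos : (0 : ℝ) < (B : ℝ) := by exact_mod_cast hB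
    refine ⟨t, ht, he, ?_, hhi, hBpos.le, hBpos⟩
    -- |A| ≤ Ab
    have h4' : (B * A ^ 2 : ℤ) ≤ B * max (A ^ 2) (B ^ 2) :=
      mul_le_mul_of_nonneg_left (le_max_left _ _) hB.le
    have h4 : ((B * A ^ 2 : ℤ) : ℝ) < (R : ℝ) ^ (n : ℝ) :=
      lt_of_le_of_lt (by exact_mod_cast h4') hH
    push_cast at h4
    have hBlo_pos : (0 : ℝ) < (R : ℝ) ^ ((n : ℝ) / 3 - lam * ((l : ℝ) + 1)) :=
      Real.rpow_pos_of_pos hρ0 _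
    have h6 : (A : ℝ) ^ 2 * (R : ℝ) ^ ((n : ℝ) / 3 - lam * ((l : ℝ) + 1)) < (R : ℝ) ^ (n : ℝ) := by
      calc (A : ℝ) ^ 2 * (R : ℝ) ^ ((n : ℝ) / 3 - lam * ((l : ℝ) + 1))
          ≤ (A : ℝ) ^ 2 * (B : ℝ) := mul_le_mul_of_nonneg_left hlo (sq_nonneg _)
        _ = (B : ℝ) * (A : ℝ) ^ 2 := by ring
        _ < (R : ℝ) ^ (n : ℝ) := h4
    have h7 : (R : ℝ) ^ (n : ℝ) = Ab ^ 2 * (R : ℝ) ^ ((n : ℝ) / 3 - lam * ((l : ℝ) + 1)) := by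
      rw [hAbdef, sq, ← Real.rpow_add hρ0, ← Real.rpow_add hρ0]
      congr 1
      ring
    rw [h7] at h6
    have h8 : (A : ℝ) ^ 2 < Ab ^ 2 := lt_of_mul_lt_mul_right h6 hBlo_pos.le
    nlinarith [sq_abs (A : ℝ), abs_nonneg (A : ℝ), hAbpos]
  by_cases h1 : ∃ A B C : ℤ, 0 < B ∧
      (∃ t ∈ Set.Icc a (a + lenJ), (A : ℝ) * θ - (B : ℝ) * t + (C : ℝ) = 0) ∧
      ((B * max (A ^ 2) (B ^ 2) : ℤ) : ℝ) < (R : ℝ) ^ (n : ℝ) ∧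
      (R : ℝ) ^ ((n : ℝ) / 3 - lam * (l + 1)) ≤ (B : ℝ) ∧ (B : ℝ) ≤ Bb
  · obtain ⟨A1, B1, C1, hb1, hseg1, hH1, hlo1, hhi1⟩ := h1
    obtain ⟨t1, ht1, he1, hA1, hBu1, hB1r, hB1pos⟩ := key A1 B1 C1 hb1 hseg1 hH1 hlo1 hhi1
    by_cases h2 : ∃ A B C : ℤ, (0 < B ∧
        (∃ t ∈ Set.Icc a (a + lenJ), (A : ℝ) * θ - (B : ℝ) * t + (C : ℝ) = 0) ∧
        ((B * max (A ^ 2) (B ^ 2) : ℤ) : ℝ) < (R : ℝ) ^ (n : ℝ) ∧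
        (R : ℝ) ^ ((n : ℝ) / 3 - lam * (l + 1)) ≤ (B : ℝ) ∧ (B : ℝ) ≤ Bb) ∧ A1 * B ≠ A * B1
    · obtain ⟨A2, B2, C2, ⟨hb2, hseg2, hH2, hlo2, hhi2⟩, hD⟩ := h2
      obtain ⟨t2, ht2, he2, hA2, hBu2, hB2r, hB2pos⟩ := key A2 B2 C2 hb2 hseg2 hH2 hlo2 hhi2
      have hDr : ((A1 : ℝ) * (B2 : ℝ) - (A2 : ℝ) * (B1 : ℝ)) ≠ 0 := by
        have hDz : (A1 * B2 - A2 * B1 : ℤ) ≠ 0 := by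
          intro hc
          exact hD (by linarith [sub_eq_zero.mp hc])
        have h : ((A1 * B2 - A2 * B1 : ℤ) : ℝ) ≠ 0 := by exact_mod_cast hDz
        push_cast at h
        exact h
      refine ⟨((B1 : ℝ) * C2 - (B2 : ℝ) * C1) / ((A1 : ℝ) * B2 - (A2 : ℝ) * B1),
        ((A1 : ℝ) * C2 - (A2 : ℝ) * C1) / ((A1 : ℝ) * B2 - (A2 : ℝ) * B1), ?_⟩
      intro A B C hB hseg hH hlo hhi
      obtain ⟨t, ht, he, hA, hBu, hBr, hBpos⟩ := key A B C hB hseg hH hlo hhi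
      have hdet := det3_aux θ a lenJ Ab Bb hlen_pos.le hAbpos.le hBbpos.le
        A B C A1 B1 C1 A2 B2 C2 t t1 t2
        ht he hA hBu hBr ht1 he1 hA1 hBu1 hB1r ht2 he2 hA2 hBu2 hB2r htrip
      have hdr : (A : ℝ) * ((B1 : ℝ) * C2 - (B2 : ℝ) * C1)
          - (B : ℝ) * ((A1 : ℝ) * C2 - (A2 : ℝ) * C1)
          + (C : ℝ) * ((A1 : ℝ) * B2 - (A2 : ℝ) * B1) = 0 := by
        have hc := congrArg (fun z : ℤ => (z : ℝ)) hdet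
        push_cast at hc
        linarith [hc]
      rw [div_eq_mul_inv, div_eq_mul_inv]
      have hinv := mul_inv_cancel₀ hDr
      linear_combination ((A1 : ℝ) * B2 - (A2 : ℝ) * B1)⁻¹ * hdr - (C : ℝ) * hinv
    · push_neg at h2
      refine ⟨θ, t1, ?_⟩
      intro A B C hB hseg hH hlo hhi
      obtain ⟨t, ht, he, hA, hBu, hBr, hBpos⟩ := key A B C hB hseg hH hlo hhi
      have hpar : A1 * B = A * B1 := h2 A B C ⟨hB, hseg, hH, hlo, hhi⟩
      have hparr : (A1 : ℝ) * (B : ℝ) = (A : ℝ) * (B1 : ℝ) := by exact_mod_cast hpar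
      have hEr : ((B1 * C - B * C1 : ℤ) : ℝ) = (B1 : ℝ) * (B : ℝ) * (t - t1) := by
        push_cast
        linear_combination (B1 : ℝ) * he - (B : ℝ) * he1 + θ * hparr
      have hts : |t - t1| ≤ lenJ := by
        rw [abs_le]
        constructor <;> [linarith [ht.1, ht1.2]; linarith [ht.2, ht1.1]]
      have habs : |((B1 * C - B * C1 : ℤ) : ℝ)| < 1 := by
        rw [hEr, abs_mul, abs_mul, abs_of_nonneg hB1r, abs_of_nonneg hBr]
        calc (B1 : ℝ) * (B : ℝ) * |t - t1| ≤ Bb * Bb * lenJ :=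
            mul_le_mul (mul_le_mul hBu1 hBu hBr hBbpos.le) hts (abs_nonneg _)
              (mul_nonneg hBbpos.le hBbpos.le)
          _ < 1 := hpair
      rw [← Int.cast_abs] at habs
      have hE1 : |B1 * C - B * C1| < 1 := by exact_mod_cast habs
      obtain ⟨hEl, hEr2⟩ := abs_lt.mp hE1
      have hE0 : B1 * C - B * C1 = 0 := by omega
      have hE0r : (B1 : ℝ) * (C : ℝ) - (B : ℝ) * (C1 : ℝ) = 0 := by exact_mod_cast hE0
      have hfin : (B1 : ℝ) * ((A : ℝ) * θ - (B : ℝ) * t1 + (C : ℝ)) = 0 := by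
        linear_combination (B : ℝ) * he1 - θ * hparr + hE0r
      have hB1ne : (B1 : ℝ) ≠ 0 := ne_of_gt hB1pos
      rcases mul_eq_zero.mp hfin with h | h
      · exact absurd h hB1ne
      · exact h
  · refine ⟨0, 0, ?_⟩
    intro A B C hB hseg hH hlo hhi
    exact absurd ⟨A, B, C, hB, hseg, hH, hlo, hhi⟩ h1
end

section
/- Let T : ℕ → ℝ satisfy T_1 ≥ 1 and, for every n ≥ 1, T_{n+1} ≥ T_n·R − T_n·a − b·∑_{l=1}^{n−1} T_{n−l}, where R ≥ 2^422, a = 2^13·R^(52/55)·log R, b = 8·R^(52/55), and the T_m are nonnegative and nondecreasing ratios in the sense T_{n−l} ≤ T_n/(R − 2^14 R^(52/55) log R)^l for l ≥ 1 (inductively). Then T_n ≥ (R − 2^14·R^(52/55)·log R)^(n−1) > 0 for all n ≥ 1. -/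
set_option maxHeartbeats 1000000

private lemma geo_half_sum (m : ℕ) :
    ∑ l ∈ Finset.Icc 1 m, ((1:ℝ)/2) ^ l ≤ 1 - (1/2) ^ m := by
  induction m with
  | zero => simp
  | succ k ih =>
    rw [Finset.sum_Icc_succ_top (by omega)]
    have h : ((1:ℝ)/2) ^ (k+1) = (1/2) ^ k / 2 := by ring
    linarith

/-- The counting recursion concluding the proof of Proposition 1: with
`a = 2^13 R^(52/55) log R`, `b = 8 R^(52/55)` and
`c = 2^14 R^(52/55) log R`, if `T 1 ≥ 1`, the `T n` are nonnegative,
`T (n+1) ≥ T n · R − T n · a − b·∑_{l=1}^{n−1} T (n−l)`, and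
`T (n−l) ≤ T n / (R − c)^l` for `1 ≤ l ≤ n−1`, then
`T n ≥ (R − c)^(n−1) > 0` for all `n ≥ 1`. -/
theorem stmt_18 (R : ℝ) (hR : (2 : ℝ) ^ 422 ≤ R) (T : ℕ → ℝ)
    (a b c : ℝ)
    (ha : a = 2 ^ 13 * R ^ ((52 : ℝ) / 55) * Real.log R)
    (hb : b = 8 * R ^ ((52 : ℝ) / 55))
    (hc : c = 2 ^ 14 * R ^ ((52 : ℝ) / 55) * Real.log R)
    (hT1 : 1 ≤ T 1) (hTnn : ∀ n, 0 ≤ T n)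
    (hrec : ∀ n : ℕ, 1 ≤ n →
      T n * R - T n * a - b * ∑ l ∈ Finset.Icc 1 (n - 1), T (n - l) ≤ T (n + 1))
    (hratio : ∀ n l : ℕ, 1 ≤ l → l ≤ n - 1 → T (n - l) ≤ T n / (R - c) ^ l) :
    ∀ n : ℕ, 1 ≤ n → (R - c) ^ (n - 1) ≤ T n ∧ 0 < T n := by
  have hR0 : (0:ℝ) < R := lt_of_lt_of_le (by positivity) hR
  set s : ℝ := R ^ ((3:ℝ)/55) with hsdef
  have hs_pos : 0 < s := Real.rpow_pos_of_pos hR0 _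
  -- s ≥ 2^23
  have hs23 : (2:ℝ) ^ 23 ≤ s := by
    have h1 : ((2:ℝ) ^ 422) ^ ((3:ℝ)/55) ≤ s :=
      Real.rpow_le_rpow (by positivity) hR (by norm_num)
    have h2 : ((2:ℝ) ^ 422) ^ ((3:ℝ)/55) = (2:ℝ) ^ ((1266:ℝ)/55) := by
      rw [← Real.rpow_natCast 2 422, ← Real.rpow_mul (by norm_num)]
      norm_num
    have h3 : (2:ℝ) ^ (23:ℝ) ≤ (2:ℝ) ^ ((1266:ℝ)/55) :=
      Real.rpow_le_rpow_of_exponent_le (by norm_num) (by norm_num)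
    have h4 : (2:ℝ) ^ (23:ℝ) = (2:ℝ) ^ (23:ℕ) := by
      rw [← Real.rpow_natCast 2 23]; norm_num
    linarith [h1, h2 ▸ h1, h3]
  -- log R = (55/3) * log s
  have hlogs : Real.log s = (3/55) * Real.log R := by
    rw [hsdef, Real.log_rpow hR0]
  -- log s ≤ 23 log 2 + (s / 2^23 - 1)
  have hlogs_le : Real.log s ≤ 23 * Real.log 2 + (s / 2 ^ 23 - 1) := by
    have h1 : Real.log (s / 2 ^ 23) ≤ s / 2 ^ 23 - 1 :=
      Real.log_le_sub_one_of_pos (by positivity)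
    have h2 : Real.log (s / 2 ^ 23) = Real.log s - 23 * Real.log 2 := by
      rw [Real.log_div (ne_of_gt hs_pos) (by positivity), Real.log_pow]
      push_cast; ring
    linarith
  have hlog2 : Real.log 2 < 0.6931472 := Real.log_two_lt_d9.trans_le (by norm_num)
  have hlog2' : (0.6931471803 : ℝ) < Real.log 2 := Real.log_two_gt_d9
  -- 2^14 * log R ≤ (2/3) * s
  have hkey : 2 ^ 14 * Real.log R ≤ (2/3) * s := by
    have hls : Real.log R = (55/3) * Real.log s := by rw [hlogs]; ring
    rw [hls]
    nlinarith [hlogs_le, hs23, hlog2]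
  -- R = R^(52/55) * s
  have hRsplit : R = R ^ ((52:ℝ)/55) * s := by
    rw [hsdef, ← Real.rpow_add hR0]
    norm_num
  have hp_pos : 0 < R ^ ((52:ℝ)/55) := Real.rpow_pos_of_pos hR0 _
  -- c ≤ (2/3) R
  have hcR : c ≤ 2/3 * R := by
    calc c = R ^ ((52:ℝ)/55) * (2 ^ 14 * Real.log R) := by rw [hc]; ring
    _ ≤ R ^ ((52:ℝ)/55) * ((2/3) * s) := by
        exact mul_le_mul_of_nonneg_left hkey (le_of_lt hp_pos)
    _ = 2/3 * (R ^ ((52:ℝ)/55) * s) := by ring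
    _ = 2/3 * R := by rw [← hRsplit]
  have hD2 : (2:ℝ) ≤ R - c := by
    have : (2:ℝ)^422 / 3 ≥ 2 := by
      have h8 : (2:ℝ)^3 ≤ 2^422 := pow_le_pow_right₀ (by norm_num) (by norm_num)
      generalize (2:ℝ)^422 = X at h8 ⊢
      norm_num at h8
      linarith only [h8]
    have hR3 : R / 3 ≥ 2 := le_trans this (by linarith only [hR])
    linarith only [hR3, hcR]
  have hD0 : (0:ℝ) < R - c := by linarith only [hD2]
  -- log R ≥ something positive
  have hlogR_pos : (1:ℝ) ≤ Real.log R := by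
    have : Real.log s = (3/55) * Real.log R := hlogs
    have h23 : Real.log (2 ^ 23 : ℝ) ≤ Real.log s :=
      Real.log_le_log (by positivity) hs23
    rw [Real.log_pow] at h23
    push_cast at h23
    nlinarith [hlog2']
  -- a + b ≤ c
  have habc : a + b ≤ c := by
    rw [ha, hb, hc]
    nlinarith only [hp_pos, hlogR_pos, mul_le_mul_of_nonneg_left hlogR_pos hp_pos.le]
  -- main induction
  intro n hn
  induction n, hn using Nat.le_induction with
  | base =>
    constructor
    · simpa using hT1
    · linarith
  | succ n hn ih =>
    obtain ⟨ihT, ihpos⟩ := ih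
    -- sum bound
    have hsum : ∑ l ∈ Finset.Icc 1 (n - 1), T (n - l) ≤ T n := by
      have hbound : ∀ l ∈ Finset.Icc 1 (n-1), T (n - l) ≤ T n * ((1:ℝ)/2) ^ l := by
        intro l hl
        rw [Finset.mem_Icc] at hl
        have h1 := hratio n l hl.1 hl.2
        have h2 : (2:ℝ) ^ l ≤ (R - c) ^ l := pow_le_pow_left₀ (by norm_num) hD2 l
        have h2p : (0:ℝ) < (2:ℝ) ^ l := by positivity
        have h3 : T n / (R - c) ^ l ≤ T n / 2 ^ l :=
          div_le_div_of_nonneg_left (hTnn n) h2p h2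
        have h4 : T n / 2 ^ l = T n * ((1:ℝ)/2) ^ l := by
          rw [div_pow, one_pow]; ring
        linarith
      calc ∑ l ∈ Finset.Icc 1 (n - 1), T (n - l)
          ≤ ∑ l ∈ Finset.Icc 1 (n - 1), T n * ((1:ℝ)/2) ^ l :=
            Finset.sum_le_sum hbound
        _ = T n * ∑ l ∈ Finset.Icc 1 (n - 1), ((1:ℝ)/2) ^ l := by
            rw [Finset.mul_sum]
        _ ≤ T n * 1 := by
            apply mul_le_mul_of_nonneg_left _ (hTnn n)
            have := geo_half_sum (n - 1)
            have : ((0:ℝ)) < (1/2:ℝ) ^ (n-1) := by positivity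
            linarith [geo_half_sum (n - 1)]
        _ = T n := mul_one _
    have hb_pos : 0 ≤ b := by rw [hb]; positivity
    have hstep : T n * (R - c) ≤ T (n + 1) := by
      have h1 := hrec n hn
      have h2 : b * ∑ l ∈ Finset.Icc 1 (n - 1), T (n - l) ≤ b * T n :=
        mul_le_mul_of_nonneg_left hsum hb_pos
      have h3 : T n * (a + b) ≤ T n * c := mul_le_mul_of_nonneg_left habc (hTnn n)
      have h4 : b * T n = T n * b := mul_comm _ _
      linarith [h1, h2, h3, h4]
    have hpow : (R - c) ^ (n + 1 - 1) = (R - c) ^ (n - 1) * (R - c) := by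
      rw [← pow_succ]
      congr 1
      omega
    constructor
    · rw [hpow]
      calc (R - c) ^ (n - 1) * (R - c) ≤ T n * (R - c) :=
            mul_le_mul_of_nonneg_right ihT (le_of_lt hD0)
        _ ≤ T (n + 1) := hstep
    · have : (0:ℝ) < T n * (R - c) := mul_pos ihpos hD0
      linarith
end
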